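/- Suppose x, u, y, v are complex numbers, α, β, δ are real numbers with α ≠ β, and the quad-equation H3 holds: e^α(xu+yv) − e^β(xv+yu) + δ(e^{2α} − e^{2β}) = 0. Then (xu + δe^α)(yv + δe^α) = (xv + δe^β)(yu + δe^β), and (e^{2α} − e^{2β})²(xu + δe^α)(yv + δe^α) = (e^α x − e^β y)(e^β x − e^α y)(e^α u − e^β v)(e^β u − e^α v). (These express h(x,u;α)h(y,v;α) = h(x,v;β)h(y,u;β) = g(x,y;α−β)g(u,v;α−β) for the biquadratics h(x,u;α) = xu + δe^α and g(x,y;α−β) = (e^α x − e^β y)(e^β x − e^α y)/(e^{2α} − e^{2β}).) -/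

import Mathlib

/-- Biquadratic identities for (H3). -/
theorem stmt_2 (x u y v : ℂ) (α β δ : ℝ) (hαβ : α ≠ β)
    (hQ : (Real.exp α : ℂ) * (x*u + y*v) - (Real.exp β : ℂ) * (x*v + y*u)
        + (δ : ℂ) * ((Real.exp (2*α) : ℂ) - (Real.exp (2*β) : ℂ)) = 0) :
    (x*u + (δ : ℂ) * (Real.exp α : ℂ)) * (y*v + (δ : ℂ) * (Real.exp α : ℂ)) =
      (x*v + (δ : ℂ) * (Real.exp β : ℂ)) * (y*u + (δ : ℂ) * (Real.exp β : ℂ)) ∧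
    ((Real.exp (2*α) : ℂ) - (Real.exp (2*β) : ℂ))^2
        * (x*u + (δ : ℂ) * (Real.exp α : ℂ)) * (y*v + (δ : ℂ) * (Real.exp α : ℂ)) =
      ((Real.exp α : ℂ) * x - (Real.exp β : ℂ) * y)
        * ((Real.exp β : ℂ) * x - (Real.exp α : ℂ) * y)
        * ((Real.exp α : ℂ) * u - (Real.exp β : ℂ) * v)
        * ((Real.exp β : ℂ) * u - (Real.exp α : ℂ) * v) := by
  set a : ℂ := (Real.exp α : ℂ) with ha
  set b : ℂ := (Real.exp β : ℂ) with hb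
  have h2a : (Real.exp (2*α) : ℂ) = a * a := by
    rw [ha, two_mul, Real.exp_add]; push_cast; ring
  have h2b : (Real.exp (2*β) : ℂ) = b * b := by
    rw [hb, two_mul, Real.exp_add]; push_cast; ring
  have hab : a ≠ b := by
    rw [ha, hb]
    exact_mod_cast fun h => hαβ (Real.exp_injective (by exact_mod_cast h))
  have hane : a ≠ -b := by
    rw [ha, hb]
    intro h
    have h1 : (0:ℝ) < Real.exp α := Real.exp_pos α
    have h2 : (0:ℝ) < Real.exp β := Real.exp_pos β
    have : (Real.exp α : ℝ) = -Real.exp β := by exact_mod_cast h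
    linarith
  have hne : a * a - b * b ≠ 0 := by
    intro h
    have : (a - b) * (a + b) = 0 := by ring_nf; linear_combination h
    rcases mul_eq_zero.mp this with h' | h'
    · exact hab (sub_eq_zero.mp h')
    · exact hane (by linear_combination h')
  rw [h2a, h2b] at hQ ⊢
  have hδ : (δ : ℂ) = (b*(x*v+y*u) - a*(x*u+y*v)) / (a*a - b*b) := by
    rw [eq_div_iff hne]
    linear_combination hQ
  have hne2 : a ^ 2 - b ^ 2 ≠ 0 := by rwa [sq, sq]
  rw [hδ]
  constructor
  · field_simp
    ring
  · field_simp
    ring
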